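/- Full correctness of Algorithm 1: given strings P and T over Σ with every character of P occurring in T and a threshold L ≥ 1, Algorithm 1 reports exactly the set of MEMs of P with respect to T that have length at least L. -/

import Mathlib

open List

variable {α : Type*}

/-- `pseg P i j` is the substring `P[i..j]` (1-based, inclusive). -/
def pseg (P : List α) (i j : ℕ) : List α := (P.take j).drop (i - 1)

/-- `P[i..j]` is a MEM (maximal exact match) of `P` with respect to `T`. -/
def IsMEM (P T : List α) (i j : ℕ) : Prop :=
  1 ≤ i ∧ i ≤ j ∧ j ≤ P.length ∧
  pseg P i j <:+: T ∧
  (i = 1 ∨ ¬ pseg P (i - 1) j <:+: T) ∧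
  (j = P.length ∨ ¬ pseg P i (j + 1) <:+: T)

/-- The maximum length of a prefix of `Q` occurring as a substring of `T`. -/
noncomputable def lcpLen (Q T : List α) : ℕ :=
  sSup {l | l ≤ Q.length ∧ Q.take l <:+: T}

/-- The maximum length of a suffix of `Q` occurring as a substring of `T`. -/
noncomputable def lcsLen (Q T : List α) : ℕ :=
  sSup {l | l ≤ Q.length ∧ Q.drop (Q.length - l) <:+: T}

/-- The length of the longest common suffix of `Q` and `R`. -/
noncomputable def lcsufLen (Q R : List α) : ℕ :=
  sSup {l | l ≤ Q.length ∧ l ≤ R.length ∧ Q.drop (Q.length - l) = R.drop (R.length - l)}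

/-- The set of MEM intervals reported by Algorithm 1, run with the given fuel from
position `i`. -/
noncomputable def algoReports (P T : List α) (L : ℕ) : ℕ → ℕ → Set (ℕ × ℕ)
  | 0, _ => ∅
  | fuel + 1, i =>
    if i + L ≤ P.length + 1 then
      if L ≤ lcsLen (P.take (i + L - 1)) T then
        let f := lcpLen (P.drop (i - 1)) T
        insert (i, i + f - 1)
          (if i + f - 1 = P.length then (∅ : Set (ℕ × ℕ))
           else algoReports P T L fuel (i + f - lcsLen (P.take (i + f)) T + 1))
      else algoReports P T L fuel (i + L - lcsLen (P.take (i + L - 1)) T)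
    else ∅

/-- full correctness of Algorithm 1: it reports exactly the MEMs of `P`
with respect to `T` of length at least `L`. -/
lemma lcp_bdd (Q T : List α) : BddAbove {l | l ≤ Q.length ∧ Q.take l <:+: T} :=
  ⟨Q.length, fun _ hl => hl.1⟩

lemma lcpLen_spec (Q T : List α) :
    lcpLen Q T ≤ Q.length ∧ Q.take (lcpLen Q T) <:+: T :=
  have h0 : 0 ∈ {l | l ≤ Q.length ∧ Q.take l <:+: T} := ⟨Nat.zero_le _, by simp⟩
  Nat.sSup_mem ⟨0, h0⟩ (lcp_bdd Q T)

lemma le_lcpLen {Q T : List α} {l : ℕ} (h1 : l ≤ Q.length) (h2 : Q.take l <:+: T) :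
    l ≤ lcpLen Q T := le_csSup (lcp_bdd Q T) ⟨h1, h2⟩

lemma take_infix_of_le {Q T : List α} {l : ℕ} (h : l ≤ lcpLen Q T) : Q.take l <:+: T := by
  have h2 := (lcpLen_spec Q T).2
  have : Q.take l = (Q.take (lcpLen Q T)).take l := by
    rw [List.take_take, min_eq_left h]
  rw [this]
  exact (List.take_prefix _ _).isInfix.trans h2

lemma lcs_bdd (Q T : List α) : BddAbove {l | l ≤ Q.length ∧ Q.drop (Q.length - l) <:+: T} :=
  ⟨Q.length, fun _ hl => hl.1⟩

lemma lcsLen_spec (Q T : List α) :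
    lcsLen Q T ≤ Q.length ∧ Q.drop (Q.length - lcsLen Q T) <:+: T :=
  have h0 : 0 ∈ {l | l ≤ Q.length ∧ Q.drop (Q.length - l) <:+: T} := ⟨Nat.zero_le _, by simp⟩
  Nat.sSup_mem ⟨0, h0⟩ (lcs_bdd Q T)

lemma le_lcsLen {Q T : List α} {l : ℕ} (h1 : l ≤ Q.length) (h2 : Q.drop (Q.length - l) <:+: T) :
    l ≤ lcsLen Q T := le_csSup (lcs_bdd Q T) ⟨h1, h2⟩

lemma drop_infix_of_le {Q T : List α} {l : ℕ} (h : l ≤ lcsLen Q T) :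
    Q.drop (Q.length - l) <:+: T := by
  have h1 := (lcsLen_spec Q T).1
  have h2 := (lcsLen_spec Q T).2
  have : Q.drop (Q.length - l) = (Q.drop (Q.length - lcsLen Q T)).drop (lcsLen Q T - l) := by
    rw [List.drop_drop]
    congr 1
    omega
  rw [this]
  exact (List.drop_suffix _ _).isInfix.trans h2

lemma pseg_eq {P : List α} {i j : ℕ} (hi : 1 ≤ i) (hij : i ≤ j) :
    pseg P i j = (P.drop (i - 1)).take (j - i + 1) := by
  have h : j - (i - 1) = j - i + 1 := by omega
  rw [pseg, List.drop_take, h]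

/-- substring of a substring is an infix -/
lemma pseg_sub_infix {P : List α} {i j a b : ℕ} (hi : 1 ≤ i) (hia : i ≤ a) (hbj : b ≤ j) :
    pseg P a b <:+: pseg P i j := by
  have h1 : P.take b = (P.take j).take b := by rw [List.take_take, min_eq_left hbj]
  rw [pseg, pseg, h1, List.drop_take]
  have h2 : (a - 1 : ℕ) = (i - 1) + (a - i) := by omega
  rw [h2, ← List.drop_drop]
  exact (List.take_prefix _ _).isInfix.trans (List.drop_suffix _ _).isInfix

lemma pseg_infix_iff {P T : List α} {i j : ℕ} (hi : 1 ≤ i) (hij : i ≤ j) (hj : j ≤ P.length) :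
    (pseg P i j <:+: T ↔ j - i + 1 ≤ lcpLen (P.drop (i - 1)) T) := by
  rw [pseg_eq hi hij]
  constructor
  · intro h
    exact le_lcpLen (by rw [List.length_drop]; omega) h
  · exact take_infix_of_le

lemma pseg_take_drop {P : List α} {k l : ℕ} (hk : k ≤ P.length) :
    (P.take k).drop ((P.take k).length - l) = pseg P (k - l + 1) k := by
  rw [pseg, List.length_take, min_eq_left hk]
  simp

lemma lcs_take_iff {P T : List α} {k l : ℕ} (hk : k ≤ P.length) (hl : l ≤ k) :
    (pseg P (k - l + 1) k <:+: T ↔ l ≤ lcsLen (P.take k) T) := by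
  rw [← pseg_take_drop hk]
  constructor
  · intro h
    exact le_lcsLen (by rw [List.length_take]; omega) h
  · exact drop_infix_of_le

lemma lcp_pos {P T : List α} (hocc : ∀ c ∈ P, [c] <:+: T) {i : ℕ} (hi : 1 ≤ i)
    (hiP : i ≤ P.length) : 1 ≤ lcpLen (P.drop (i - 1)) T := by
  have hne : P.drop (i - 1) ≠ [] := by
    intro h
    have := congrArg List.length h
    simp [List.length_drop] at this
    omega
  obtain ⟨c, t, hct⟩ := List.exists_cons_of_ne_nil hne
  apply le_lcpLen (by rw [List.length_drop]; omega)
  rw [hct]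
  simp only [List.take_succ_cons, List.take_zero]
  apply hocc
  have : c ∈ P.drop (i - 1) := by rw [hct]; exact List.mem_cons_self
  exact (List.drop_sublist _ _).subset this

lemma lcs_pos {P T : List α} (hocc : ∀ c ∈ P, [c] <:+: T) {k : ℕ} (hk1 : 1 ≤ k)
    (hkP : k ≤ P.length) : 1 ≤ lcsLen (P.take k) T := by
  set Q := P.take k with hQ
  have hlen : Q.length = k := by rw [hQ, List.length_take, min_eq_left hkP]
  have hd : (Q.drop (Q.length - 1)).length = 1 := by
    rw [List.length_drop]; omega
  obtain ⟨c, hc⟩ := List.length_eq_one_iff.mp hd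
  have hcP : c ∈ P := by
    have : c ∈ Q := (List.drop_sublist _ _).subset (hc ▸ List.mem_singleton_self c)
    exact List.take_subset _ _ this
  apply le_lcsLen (by omega)
  rw [hc]
  exact hocc c hcP

lemma isMEM_iff {P T : List α} (hocc : ∀ c ∈ P, [c] <:+: T) {i j : ℕ} (hi : 1 ≤ i) :
    IsMEM P T i j ↔
      (i ≤ P.length ∧ j + 1 = i + lcpLen (P.drop (i - 1)) T ∧
        (i = 1 ∨ ¬ pseg P (i - 1) j <:+: T)) := by
  set f := lcpLen (P.drop (i - 1)) T with hfdef
  constructor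
  · rintro ⟨-, hij, hjP, hinf, hleft, hright⟩
    have hle : j - i + 1 ≤ f := (pseg_infix_iff hi hij hjP).mp hinf
    have hup : f ≤ P.length - (i - 1) := by
      have := (lcpLen_spec (P.drop (i - 1)) T).1
      rwa [List.length_drop] at this
    have hiP : i ≤ P.length := le_trans hij hjP
    refine ⟨hiP, ?_, hleft⟩
    rcases Nat.lt_or_ge j P.length with hlt | hge
    · rcases hright with h | h
      · omega
      · have : ¬ (j + 1 - i + 1 ≤ f) := fun hc =>
          h ((pseg_infix_iff hi (by omega) (by omega)).mpr hc)
        omega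
    · omega
  · rintro ⟨hiP, hjf, hleft⟩
    have hf1 : 1 ≤ f := lcp_pos hocc hi hiP
    have hup : f ≤ P.length - (i - 1) := by
      have := (lcpLen_spec (P.drop (i - 1)) T).1
      rwa [List.length_drop] at this
    have hij : i ≤ j := by omega
    have hjP : j ≤ P.length := by omega
    refine ⟨hi, hij, hjP, ?_, hleft, ?_⟩
    · exact (pseg_infix_iff hi hij hjP).mpr (by omega)
    · rcases Nat.lt_or_ge j P.length with hlt | hge
      · right
        intro hc
        have := (pseg_infix_iff hi (by omega) (by omega)).mp hc
        omega
      · left; omega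


lemma algoReports_zero (P T : List α) (L i : ℕ) : algoReports P T L 0 i = ∅ := rfl

lemma algoReports_succ (P T : List α) (L n i : ℕ) :
    algoReports P T L (n + 1) i =
      if i + L ≤ P.length + 1 then
        if L ≤ lcsLen (P.take (i + L - 1)) T then
          insert (i, i + lcpLen (P.drop (i - 1)) T - 1)
            (if i + lcpLen (P.drop (i - 1)) T - 1 = P.length then (∅ : Set (ℕ × ℕ))
             else algoReports P T L n
               (i + lcpLen (P.drop (i - 1)) T -
                 lcsLen (P.take (i + lcpLen (P.drop (i - 1)) T)) T + 1))
        else algoReports P T L n (i + L - lcsLen (P.take (i + L - 1)) T)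
      else ∅ := rfl

lemma main_lemma (P T : List α) (L : ℕ) (hL : 1 ≤ L) (hocc : ∀ c ∈ P, [c] <:+: T) :
    ∀ (fuel : ℕ), ∀ (i : ℕ), 1 ≤ i → P.length + 2 ≤ fuel + i →
      (i = 1 ∨ lcpLen (P.drop (i - 2)) T ≤ lcpLen (P.drop (i - 1)) T) →
      ∀ a b, ((a, b) ∈ algoReports P T L fuel i ↔
        (IsMEM P T a b ∧ L ≤ b - a + 1 ∧ i ≤ a)) := by
  intro fuel
  induction fuel with
  | zero =>
    intro i hi hfuel _ a b
    rw [algoReports_zero]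
    simp only [Set.mem_empty_iff_false, false_iff]
    rintro ⟨hmem, -, hia⟩
    have h1 : a ≤ b := hmem.2.1
    have h2 : b ≤ P.length := hmem.2.2.1
    omega
  | succ n ih =>
    intro i hi hfuel hinv a b
    by_cases hcond : i + L ≤ P.length + 1
    case neg =>
      rw [algoReports_succ, if_neg hcond]
      simp only [Set.mem_empty_iff_false, false_iff]
      rintro ⟨hmem, hlen, hia⟩
      have h1 : a ≤ b := hmem.2.1
      have h2 : b ≤ P.length := hmem.2.2.1
      omega
    case pos =>
    have hiP : i ≤ P.length := by omega
    by_cases hb : L ≤ lcsLen (P.take (i + L - 1)) T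
    case pos =>
      rw [algoReports_succ, if_pos hcond, if_pos hb]
      set f := lcpLen (P.drop (i - 1)) T with hfdef
      have hupf : f ≤ P.length - (i - 1) := by
        have := (lcpLen_spec (P.drop (i - 1)) T).1
        rwa [List.length_drop] at this
      have hseg : pseg P i (i + L - 1) <:+: T := by
        have h := (lcs_take_iff (P := P) (T := T) (k := i + L - 1) (l := L)
          (by omega) (by omega)).mpr hb
        have heq : i + L - 1 - L + 1 = i := by omega
        rwa [heq] at h
      have hLf : L ≤ f := by
        have := (pseg_infix_iff hi (by omega) (by omega)).mp hseg
        omega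
      have hf1 : 1 ≤ f := le_trans hL hLf
      have hmatch : pseg P i (i + f - 1) <:+: T :=
        (pseg_infix_iff hi (by omega) (by omega)).mpr (by omega)
      have hrep : IsMEM P T i (i + f - 1) := by
        refine (isMEM_iff hocc hi).mpr ⟨hiP, by omega, ?_⟩
        by_cases h1 : i = 1
        · exact Or.inl h1
        · right
          intro hc
          have hfprev := (pseg_infix_iff (i := i - 1) (j := i + f - 1)
            (by omega) (by omega) (by omega)).mp hc
          rcases hinv with h | h
          · omega
          · have he : i - 1 - 1 = i - 2 := by omega
            rw [he] at hfprev
            omega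
      have huniq : ∀ a' b', IsMEM P T a' b' → a' = i → b' = i + f - 1 := by
        intro a' b' hmem ha
        have hchar := (isMEM_iff hocc (show 1 ≤ a' by omega)).mp hmem
        rw [ha] at hchar
        have h21 := hchar.2.1
        omega
      by_cases hbreak : i + f - 1 = P.length
      case pos =>
        rw [if_pos hbreak, Set.mem_insert_iff]
        simp only [Set.mem_empty_iff_false, or_false]
        constructor
        · intro h
          rw [Prod.mk.injEq] at h
          obtain ⟨rfl, rfl⟩ := h
          exact ⟨hrep, by omega, le_rfl⟩
        · rintro ⟨hmem, hlen, hia⟩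
          have hbP : b ≤ P.length := hmem.2.2.1
          have ha : a = i := by
            by_contra hne
            have hlt : i < a := by omega
            have hsub : pseg P (a - 1) b <:+: T :=
              (pseg_sub_infix hi (by omega) (by omega)).trans hmatch
            rcases hmem.2.2.2.2.1 with h1 | h1
            · omega
            · exact h1 hsub
          have hb' : b = i + f - 1 := huniq a b hmem ha
          rw [Prod.mk.injEq]
          exact ⟨ha, hb'⟩
      case neg =>
        have hifP : i + f ≤ P.length := by omega
        set c := lcsLen (P.take (i + f)) T with hcdef
        have hc1 : 1 ≤ c := lcs_pos hocc (by omega) hifP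
        have hnix : ¬ pseg P i (i + f) <:+: T := by
          intro hcon
          have := (pseg_infix_iff hi (by omega) hifP).mp hcon
          omega
        have hcf : c ≤ f := by
          by_contra hcon
          push_neg at hcon
          have h := (lcs_take_iff (T := T) hifP (show f + 1 ≤ i + f by omega)).mpr (by omega)
          have he : i + f - (f + 1) + 1 = i := by omega
          rw [he] at h
          exact hnix h
        rw [if_neg hbreak]
        set i' := i + f - c + 1 with hi'def
        have hii' : i + 1 ≤ i' := by omega
        have hinv' : i' = 1 ∨ lcpLen (P.drop (i' - 2)) T ≤ lcpLen (P.drop (i' - 1)) T := by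
          right
          have hA : pseg P i' (i + f) <:+: T := by
            have h := (lcs_take_iff hifP (show c ≤ i + f by omega)).mpr hcdef.le
            have he : i + f - c + 1 = i' := hi'def.symm
            rwa [he] at h
          have hge : c ≤ lcpLen (P.drop (i' - 1)) T := by
            have := (pseg_infix_iff (i := i') (by omega) (by omega) hifP).mp hA
            omega
          have hB : ¬ pseg P (i' - 1) (i + f) <:+: T := by
            intro hcon
            have he : i' - 1 = i + f - (c + 1) + 1 := by omega
            rw [he] at hcon
            have := (lcs_take_iff hifP (show c + 1 ≤ i + f by omega)).mp hcon
            omega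
          have hle : lcpLen (P.drop (i' - 1 - 1)) T ≤ c := by
            by_contra hcon
            push_neg at hcon
            exact hB ((pseg_infix_iff (i := i' - 1) (by omega) (by omega) hifP).mpr (by omega))
          have he2 : i' - 1 - 1 = i' - 2 := by omega
          rw [he2] at hle
          omega
        have hbetween : ∀ a' b', IsMEM P T a' b' → i < a' → a' < i' → False := by
          intro a' b' hmem hlt hlt2
          have ha1 : 1 ≤ a' := by omega
          have hb'le : b' ≤ i + f - 1 := by
            by_contra hcon
            push_neg at hcon
            have hsub : pseg P a' (i + f) <:+: T :=
              (pseg_sub_infix ha1 (le_refl a') (by omega)).trans hmem.2.2.2.1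
            have he : a' = i + f - (i + f - a' + 1) + 1 := by omega
            rw [he] at hsub
            have := (lcs_take_iff hifP (by omega)).mp hsub
            omega
          have hsub2 : pseg P (a' - 1) b' <:+: T :=
            (pseg_sub_infix hi (by omega) (by omega)).trans hmatch
          rcases hmem.2.2.2.2.1 with h1 | h1
          · omega
          · exact h1 hsub2
        have hrec := ih i' (by omega) (by omega) hinv'
        rw [Set.mem_insert_iff, hrec a b]
        constructor
        · rintro (h | ⟨hmem, hlen, hia⟩)
          · rw [Prod.mk.injEq] at h
            obtain ⟨rfl, rfl⟩ := h
            exact ⟨hrep, by omega, le_rfl⟩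
          · exact ⟨hmem, hlen, by omega⟩
        · rintro ⟨hmem, hlen, hia⟩
          rcases eq_or_lt_of_le hia with heq | hlt
          · left
            have hb' := huniq a b hmem heq.symm
            rw [Prod.mk.injEq]
            exact ⟨heq.symm, hb'⟩
          · right
            refine ⟨hmem, hlen, ?_⟩
            by_contra hcon
            push_neg at hcon
            exact hbetween a b hmem hlt hcon
    case neg =>
      rw [algoReports_succ, if_pos hcond, if_neg hb]
      set s := lcsLen (P.take (i + L - 1)) T with hsdef
      have hs1 : 1 ≤ s := lcs_pos hocc (by omega) (by omega)
      have hsL : s < L := by omega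
      set i' := i + L - s with hi'def
      have hii' : i + 1 ≤ i' := by omega
      have hinv' : i' = 1 ∨ lcpLen (P.drop (i' - 2)) T ≤ lcpLen (P.drop (i' - 1)) T := by
        right
        have hA : pseg P i' (i + L - 1) <:+: T := by
          have h := (lcs_take_iff (k := i + L - 1) (by omega) (by omega)).mpr hsdef.le
          have he : i + L - 1 - s + 1 = i' := by omega
          rwa [he] at h
        have hge : s ≤ lcpLen (P.drop (i' - 1)) T := by
          have := (pseg_infix_iff (i := i') (by omega) (by omega) (by omega)).mp hA
          omega
        have hB : ¬ pseg P (i' - 1) (i + L - 1) <:+: T := by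
          intro hcon
          have he : i' - 1 = i + L - 1 - (s + 1) + 1 := by omega
          rw [he] at hcon
          have := (lcs_take_iff (by omega) (show s + 1 ≤ i + L - 1 by omega)).mp hcon
          omega
        have hle : lcpLen (P.drop (i' - 1 - 1)) T ≤ s := by
          by_contra hcon
          push_neg at hcon
          exact hB ((pseg_infix_iff (i := i' - 1) (by omega) (by omega) (by omega)).mpr (by omega))
        have he2 : i' - 1 - 1 = i' - 2 := by omega
        rw [he2] at hle
        omega
      have hrange : ∀ a' b', IsMEM P T a' b' → L ≤ b' - a' + 1 → i ≤ a' → i' ≤ a' := by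
        intro a' b' hmem hlen hia
        by_contra hcon
        push_neg at hcon
        have ha1 : 1 ≤ a' := by omega
        have hchar := (isMEM_iff hocc ha1).mp hmem
        have h21 := hchar.2.1
        have hab : a' ≤ b' := hmem.2.1
        have hseg2 : pseg P a' (i + L - 1) <:+: T := by
          apply (pseg_infix_iff ha1 (by omega) (by omega)).mpr
          omega
        have he : a' = i + L - 1 - (i + L - a') + 1 := by omega
        rw [he] at hseg2
        have := (lcs_take_iff (by omega) (show i + L - a' ≤ i + L - 1 by omega)).mp hseg2
        omega
      rw [ih i' (by omega) (by omega) hinv' a b]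
      constructor
      · rintro ⟨hmem, hlen, hia⟩
        exact ⟨hmem, hlen, by omega⟩
      · rintro ⟨hmem, hlen, hia⟩
        exact ⟨hmem, hlen, hrange a b hmem hlen hia⟩


theorem algorithm_correct (P T : List α) (L : ℕ)
    (hL : 1 ≤ L)
    (hocc : ∀ c ∈ P, [c] <:+: T) :
    ∀ i j, (i, j) ∈ algoReports P T L (P.length + 1) 1 ↔
      (IsMEM P T i j ∧ L ≤ j - i + 1) := by
  intro i j
  rw [main_lemma P T L hL hocc (P.length + 1) 1 (le_refl 1) (by omega) (Or.inl rfl) i j]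
  constructor
  · rintro ⟨h1, h2, -⟩
    exact ⟨h1, h2⟩
  · rintro ⟨h1, h2⟩
    exact ⟨h1, h2, h1.1⟩
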